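/- The number of conjugacy classes of SL_2(F_q), for q an odd prime power, equals q + 4. -/

import Mathlib

open Matrix Polynomial Finset

set_option linter.unusedSectionVars false
set_option linter.unreachableTactic false
set_option linter.unusedTactic false
set_option linter.unusedVariables false

namespace SL2Count

variable {F : Type*} [Field F] [Fintype F]

local notation "SL2" => Matrix.SpecialLinearGroup (Fin 2) F

def trM (A : Matrix.SpecialLinearGroup (Fin 2) F) : F :=
  Matrix.trace (A : Matrix (Fin 2) (Fin 2) F)

lemma trM_conj (c A : SL2) : trM (c * A * c⁻¹) = trM A := by
  unfold trM
  have h1 : ((c * A * c⁻¹ : SL2) : Matrix (Fin 2) (Fin 2) F)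
      = (c : Matrix (Fin 2) (Fin 2) F) * A * (c⁻¹ : SL2) := by
    simp [Matrix.SpecialLinearGroup.coe_mul]
  have h2 : ((c⁻¹ : SL2) : Matrix (Fin 2) (Fin 2) F) * c = 1 := by
    rw [← Matrix.SpecialLinearGroup.coe_mul, inv_mul_cancel,
      Matrix.SpecialLinearGroup.coe_one]
  rw [h1, Matrix.trace_mul_cycle, mul_assoc, ← mul_assoc, h2, one_mul]

noncomputable def trC : ConjClasses SL2 → F :=
  Quotient.lift trM (fun a b (h : IsConj a b) => by
    obtain ⟨c, hc⟩ := isConj_iff.mp h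
    rw [← hc, trM_conj])

lemma trC_mk (A : SL2) : trC (ConjClasses.mk A) = trM A := rfl

lemma isConj_iff' (A B : SL2) :
    IsConj A B ↔ ∃ P : Matrix (Fin 2) (Fin 2) F,
      P.det = 1 ∧ P * (A : Matrix (Fin 2) (Fin 2) F) = (B : Matrix (Fin 2) (Fin 2) F) * P := by
  rw [isConj_iff]
  constructor
  · rintro ⟨c, rfl⟩
    refine ⟨c, c.2, ?_⟩
    have h : (c * A : SL2) = (c * A * c⁻¹) * c := by group
    have h2 := congrArg (fun x : SL2 => (x : Matrix (Fin 2) (Fin 2) F)) h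
    simpa only [Matrix.SpecialLinearGroup.coe_mul] using h2
  · rintro ⟨P, hP, hcomm⟩
    refine ⟨⟨P, hP⟩, ?_⟩
    apply mul_inv_eq_of_eq_mul
    exact Subtype.ext hcomm

lemma univ_quad (hchar : ringChar F ≠ 2) (t c : F) (ht : t * t - 4 ≠ 0) (hc : c ≠ 0) :
    ∃ x y : F, x * x + t * x * y + y * y = c := by
  have h2 : (2 : F) ≠ 0 := Ring.two_ne_zero hchar
  obtain ⟨h, hh⟩ : ∃ h : F, 2 * h = 1 := ⟨2⁻¹, mul_inv_cancel₀ h2⟩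
  have hkne : 1 - t * t * h * h ≠ 0 := by
    intro h0
    apply ht
    linear_combination (-4 : F) * h0 - (t * t * (1 + 2 * h)) * hh
  obtain ⟨u, v, huv⟩ := FiniteField.exists_root_sum_quadratic
    (f := (X : F[X]) ^ 2 - C c) (g := C (1 - t * t * h * h) * X ^ 2)
    (degree_X_pow_sub_C (by norm_num) c) (by rw [degree_C_mul hkne, degree_X_pow]; norm_num)
    (FiniteField.odd_card_of_char_ne_two hchar)
  simp only [eval_add, eval_sub, eval_pow, eval_X, eval_C, eval_mul] at huv
  refine ⟨u - t * v * h, v, ?_⟩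
  linear_combination huv + (t * t * v * v * h - t * u * v) * hh

lemma exists_P0 (a b c d t : F) (hdet : a * d - b * c = 1) (htr : a + d = t)
    (ht : t * t - 4 ≠ 0) :
    ∃ P : Matrix (Fin 2) (Fin 2) F, P.det ≠ 0 ∧
      P * !![0, -1; 1, t] = !![a, b; c, d] * P := by
  subst htr
  by_cases hc : c = 0
  · by_cases hb : b = 0
    · subst hc; subst hb
      have had : a ≠ d := by
        intro h
        exact ht (by linear_combination 4 * hdet + (a - d) * h)
      refine ⟨!![1, a; 1, d], ?_, ?_⟩
      · rw [Matrix.det_fin_two_of]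
        simpa [sub_ne_zero] using had.symm
      · ext i j
        fin_cases i <;> fin_cases j <;>
          simp [Matrix.mul_apply, Fin.sum_univ_two] <;>
          (first | ring1 | linear_combination hdet | linear_combination -hdet)
    · refine ⟨!![0, b; 1, d], ?_, ?_⟩
      · rw [Matrix.det_fin_two_of]; simpa using hb
      · subst hc
        ext i j
        fin_cases i <;> fin_cases j <;>
          simp [Matrix.mul_apply, Fin.sum_univ_two] <;>
          (first | ring1 | linear_combination hdet | linear_combination -hdet)
  · refine ⟨!![1, a; 0, c], ?_, ?_⟩
    · rw [Matrix.det_fin_two_of]; simpa using hc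
    · ext i j
      fin_cases i <;> fin_cases j <;>
        simp [Matrix.mul_apply, Fin.sum_univ_two] <;>
        (first | ring1 | linear_combination hdet | linear_combination -hdet)

def CM (t : F) : SL2 :=
  ⟨!![0, -1; 1, t], by simp [Matrix.det_fin_two_of]⟩

lemma trM_CM (t : F) : trM (CM t) = t := by
  simp [trM, CM, Matrix.trace_fin_two]

lemma conj_CM (hchar : ringChar F ≠ 2) (A : SL2) (t : F) (htr : trM A = t)
    (ht : t * t - 4 ≠ 0) : IsConj (CM t) A := by
  rw [isConj_iff']
  have hdet : (A : Matrix (Fin 2) (Fin 2) F) 0 0 * (A : Matrix (Fin 2) (Fin 2) F) 1 1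
      - (A : Matrix (Fin 2) (Fin 2) F) 0 1 * (A : Matrix (Fin 2) (Fin 2) F) 1 0 = 1 := by
    have := A.2
    rwa [Matrix.det_fin_two] at this
  have htr' : (A : Matrix (Fin 2) (Fin 2) F) 0 0 + (A : Matrix (Fin 2) (Fin 2) F) 1 1 = t := by
    have h1 : trM A = (A : Matrix (Fin 2) (Fin 2) F) 0 0 + (A : Matrix (Fin 2) (Fin 2) F) 1 1 :=
      Matrix.trace_fin_two _
    rw [← h1, htr]
  obtain ⟨P0, he, hcomm⟩ := exists_P0 _ _ _ _ t hdet htr' ht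
  rw [← Matrix.eta_fin_two (A : Matrix (Fin 2) (Fin 2) F)] at hcomm
  obtain ⟨x, y, hxy⟩ := univ_quad hchar t (P0.det)⁻¹ ht (inv_ne_zero he)
  refine ⟨P0 * !![x, -y; y, x + t * y], ?_, ?_⟩
  · rw [Matrix.det_mul, Matrix.det_fin_two_of]
    have h1 : x * (x + t * y) - -y * y = x * x + t * x * y + y * y := by ring
    rw [h1, hxy, mul_inv_cancel₀ he]
  · have hN : !![x, -y; y, x + t * y] * !![0, -1; 1, t]
        = !![0, -1; 1, t] * !![x, -y; y, x + t * y] := by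
      ext i j
      fin_cases i <;> fin_cases j <;> simp [Matrix.mul_apply, Fin.sum_univ_two] <;> ring1
    have hCM : (CM t : Matrix (Fin 2) (Fin 2) F) = !![0, -1; 1, t] := rfl
    rw [hCM, mul_assoc, hN, ← mul_assoc, hcomm, mul_assoc]

/-- scalar element -/
def SS (s : F) (hs : s * s = 1) : SL2 :=
  ⟨!![s, 0; 0, s], by simp [Matrix.det_fin_two_of, hs]⟩

/-- upper triangular unipotent-type element -/
def VV (s l : F) (hs : s * s = 1) : SL2 :=
  ⟨!![s, l; 0, s], by simp [Matrix.det_fin_two_of, hs]⟩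

lemma trM_SS (s : F) (hs : s * s = 1) : trM (SS s hs) = 2 * s := by
  simp [trM, SS, Matrix.trace_fin_two]; ring

lemma trM_VV (s l : F) (hs : s * s = 1) : trM (VV s l hs) = 2 * s := by
  simp [trM, VV, Matrix.trace_fin_two]; ring

lemma conj_VV_sq (s a p : F) (hs : s * s = 1) (hp : p ≠ 0) :
    IsConj (VV s a hs) (VV s (a * p * p) hs) := by
  have hpinv : p * p⁻¹ = 1 := mul_inv_cancel₀ hp
  rw [isConj_iff']
  refine ⟨!![p, 0; 0, p⁻¹], by rw [Matrix.det_fin_two_of]; linear_combination hpinv, ?_⟩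
  show !![p, 0; 0, p⁻¹] * !![s, a; 0, s] = !![s, a * p * p; 0, s] * !![p, 0; 0, p⁻¹]
  ext i j
  fin_cases i <;> fin_cases j <;> simp [Matrix.mul_apply, Fin.sum_univ_two] <;>
    (first | ring1 | linear_combination a * p * hpinv | linear_combination -(a*p)*hpinv)

lemma conj_VV_iff (s a b : F) (hs : s * s = 1) (hb : b ≠ 0)
    (h : IsConj (VV s a hs) (VV s b hs)) : ∃ p : F, p ≠ 0 ∧ b = a * p * p := by
  rw [isConj_iff'] at h
  obtain ⟨P, hdet, hc⟩ := h
  rw [Matrix.det_fin_two] at hdet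
  have h00 := congrFun (congrFun hc 0) 0
  have h01 := congrFun (congrFun hc 0) 1
  simp [VV, Matrix.mul_apply, Fin.sum_univ_two] at h00 h01
  have hr : P 1 0 = 0 := by
    rcases mul_eq_zero.mp (show b * P 1 0 = 0 by linear_combination -h00) with h' | h'
    · exact absurd h' hb
    · exact h'
  have hw : P 0 0 * P 1 1 = 1 := by linear_combination hdet + P 0 1 * hr
  refine ⟨P 0 0, ?_, ?_⟩
  · intro h0
    rw [h0, zero_mul] at hw
    exact zero_ne_one hw
  · linear_combination (-(P 0 0)) * h01 - b * hw

lemma not_conj_SS_VV (s l : F) (hs : s * s = 1) (hl : l ≠ 0) :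
    ¬ IsConj (SS s hs) (VV s l hs) := by
  rw [isConj_iff']
  rintro ⟨P, hdet, hc⟩
  rw [Matrix.det_fin_two] at hdet
  have h00 := congrFun (congrFun hc 0) 0
  have h01 := congrFun (congrFun hc 0) 1
  simp [SS, VV, Matrix.mul_apply, Fin.sum_univ_two] at h00 h01
  have hr : P 1 0 = 0 := by
    rcases mul_eq_zero.mp (show l * P 1 0 = 0 by linear_combination -h00) with h' | h'
    · exact absurd h' hl
    · exact h'
  have hw : P 1 1 = 0 := by
    rcases mul_eq_zero.mp (show l * P 1 1 = 0 by linear_combination -h01) with h' | h'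
    · exact absurd h' hl
    · exact h'
  rw [hr, hw] at hdet
  simp at hdet

lemma trM_eq (A : SL2) :
    Matrix.trace (A : Matrix (Fin 2) (Fin 2) F)
      = (A : Matrix (Fin 2) (Fin 2) F) 0 0 + (A : Matrix (Fin 2) (Fin 2) F) 1 1 :=
  Matrix.trace_fin_two _

lemma trace_two_cases (s : F) (hs : s * s = 1) (A : SL2) (htr : trM A = 2 * s)
    (hA : A ≠ SS s hs) : ∃ l : F, l ≠ 0 ∧ IsConj (VV s l hs) A := by
  have hdet : (A : Matrix (Fin 2) (Fin 2) F) 0 0 * (A : Matrix (Fin 2) (Fin 2) F) 1 1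
      - (A : Matrix (Fin 2) (Fin 2) F) 0 1 * (A : Matrix (Fin 2) (Fin 2) F) 1 0 = 1 := by
    have := A.2; rwa [Matrix.det_fin_two] at this
  have htr' : (A : Matrix (Fin 2) (Fin 2) F) 0 0 + (A : Matrix (Fin 2) (Fin 2) F) 1 1 = 2 * s := by
    rw [← trM_eq]; exact htr
  set a := (A : Matrix (Fin 2) (Fin 2) F) 0 0 with ha'
  set b := (A : Matrix (Fin 2) (Fin 2) F) 0 1 with hb'
  set c := (A : Matrix (Fin 2) (Fin 2) F) 1 0 with hc'
  set d := (A : Matrix (Fin 2) (Fin 2) F) 1 1 with hd'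
  by_cases hc : c = 0
  · have hd : d = s := by
      have h0 : (d - s) * (d - s) = 0 := by
        linear_combination d * htr' - hdet + hs - b * hc
      exact sub_eq_zero.mp (mul_self_eq_zero.mp h0)
    have ha : a = s := by linear_combination htr' - hd
    have hAeq : (A : Matrix (Fin 2) (Fin 2) F) = !![s, b; 0, s] := by
      have h1 := Matrix.eta_fin_two (A : Matrix (Fin 2) (Fin 2) F)
      rw [← ha', ← hb', ← hc', ← hd', ha, hd, hc] at h1
      exact h1
    by_cases hb : b = 0
    · exfalso
      exact hA (Subtype.ext (by rw [hAeq, hb]; rfl))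
    · exact ⟨b, hb, by rw [show VV s b hs = A from (Subtype.ext hAeq.symm)]⟩
  · have hcinv : c * c⁻¹ = 1 := mul_inv_cancel₀ hc
    refine ⟨-c, neg_ne_zero.mpr hc, ?_⟩
    rw [isConj_iff']
    refine ⟨!![(s - a) * c⁻¹, 1; -1, 0], by rw [Matrix.det_fin_two_of]; ring, ?_⟩
    have hV : ((VV s (-c) hs : SL2) : Matrix (Fin 2) (Fin 2) F) = !![s, -c; 0, s] := rfl
    rw [hV, Matrix.eta_fin_two (A : Matrix (Fin 2) (Fin 2) F), ← ha', ← hb', ← hc', ← hd']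
    ext i j
    fin_cases i <;> fin_cases j <;> simp [Matrix.mul_apply, Fin.sum_univ_two] <;>
      (first
        | ring1
        | linear_combination c⁻¹ * hs - c⁻¹ * hdet + a * c⁻¹ * htr' - b * hcinv
        | linear_combination -(c⁻¹ * hs - c⁻¹ * hdet + a * c⁻¹ * htr' - b * hcinv)
        | linear_combination (s - a) * hcinv
        | linear_combination -((s - a) * hcinv)
        | linear_combination htr' - (s - a) * hcinv
        | linear_combination -(htr' - (s - a) * hcinv)
        | linear_combination htr' + (s - a) * hcinv
        | linear_combination -htr' + (s - a) * hcinv)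

lemma nonsq_ratio (hchar : ringChar F ≠ 2) {a b : F} (ha0 : a ≠ 0) (hb0 : b ≠ 0)
    (ha : ¬IsSquare a) (hb : ¬IsSquare b) : IsSquare (a * b⁻¹) := by
  rw [FiniteField.isSquare_iff hchar (mul_ne_zero ha0 (inv_ne_zero hb0))]
  have haa : a ^ (Fintype.card F / 2) = -1 := by
    rcases FiniteField.pow_dichotomy hchar ha0 with h | h
    · exact absurd ((FiniteField.isSquare_iff hchar ha0).mpr h) ha
    · exact h
  have hbb : b ^ (Fintype.card F / 2) = -1 := by
    rcases FiniteField.pow_dichotomy hchar hb0 with h | h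
    · exact absurd ((FiniteField.isSquare_iff hchar hb0).mpr h) hb
    · exact h
  rw [mul_pow, inv_pow, haa, hbb]
  simp

lemma fiber_ne_eq (hchar : ringChar F ≠ 2) (t : F) (ht : t * t - 4 ≠ 0)
    (x : ConjClasses (Matrix.SpecialLinearGroup (Fin 2) F)) :
    trC x = t ↔ x = ConjClasses.mk (CM t) := by
  constructor
  · intro hx
    obtain ⟨A, rfl⟩ := ConjClasses.mk_surjective x
    rw [trC_mk] at hx
    exact ConjClasses.mk_eq_mk_iff_isConj.mpr (conj_CM hchar A t hx ht).symm
  · rintro rfl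
    rw [trC_mk, trM_CM]

lemma fiber_two_eq (hchar : ringChar F ≠ 2) {η : F} (hη : ¬ IsSquare η) (hη0 : η ≠ 0)
    (s : F) (hs : s * s = 1) (x : ConjClasses (Matrix.SpecialLinearGroup (Fin 2) F)) :
    trC x = 2 * s ↔ x = ConjClasses.mk (SS s hs) ∨ x = ConjClasses.mk (VV s 1 hs)
      ∨ x = ConjClasses.mk (VV s η hs) := by
  constructor
  · intro hx
    obtain ⟨A, rfl⟩ := ConjClasses.mk_surjective x
    rw [trC_mk] at hx
    by_cases hA : A = SS s hs
    · left; rw [hA]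
    · obtain ⟨l, hl0, hconj⟩ := trace_two_cases s hs A hx hA
      by_cases hsq : IsSquare l
      · obtain ⟨p, hp⟩ := hsq
        have hp0 : p ≠ 0 := by rintro rfl; rw [mul_zero] at hp; exact hl0 hp
        right; left
        have h1 : IsConj (VV s 1 hs) (VV s l hs) := by
          have h2 := conj_VV_sq s 1 p hs hp0
          rwa [show (1:F) * p * p = l by rw [one_mul, ← hp]] at h2
        exact (ConjClasses.mk_eq_mk_iff_isConj.mpr (h1.trans hconj).symm)
      · right; right
        obtain ⟨p, hp⟩ := nonsq_ratio hchar hl0 hη0 hsq hη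
        have hp0 : p ≠ 0 := by
          rintro rfl
          rw [mul_zero] at hp
          exact (mul_ne_zero hl0 (inv_ne_zero hη0)) hp
        have hηinv : η * η⁻¹ = 1 := mul_inv_cancel₀ hη0
        have hl : l = η * p * p := by linear_combination η * hp - l * hηinv
        have h1 : IsConj (VV s η hs) (VV s l hs) := by
          have h2 := conj_VV_sq s η p hs hp0
          rwa [← hl] at h2
        exact (ConjClasses.mk_eq_mk_iff_isConj.mpr (h1.trans hconj).symm)
  · rintro (rfl | rfl | rfl)
    · rw [trC_mk]; exact trM_SS s hs
    · rw [trC_mk]; exact trM_VV s 1 hs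
    · rw [trC_mk]; exact trM_VV s η hs

lemma three_distinct {η : F} (hη : ¬IsSquare η) (hη0 : η ≠ 0) (s : F) (hs : s * s = 1) :
    ConjClasses.mk (SS s hs) ≠ ConjClasses.mk (VV s 1 hs) ∧
    ConjClasses.mk (SS s hs) ≠ ConjClasses.mk (VV s η hs) ∧
    ConjClasses.mk (VV s 1 hs) ≠ ConjClasses.mk (VV s η hs) := by
  refine ⟨?_, ?_, ?_⟩
  · intro h
    exact not_conj_SS_VV s 1 hs one_ne_zero (ConjClasses.mk_eq_mk_iff_isConj.mp h)
  · intro h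
    exact not_conj_SS_VV s η hs hη0 (ConjClasses.mk_eq_mk_iff_isConj.mp h)
  · intro h
    obtain ⟨p, hp0, hp⟩ := conj_VV_iff s 1 η hs hη0 (ConjClasses.mk_eq_mk_iff_isConj.mp h)
    exact hη ⟨p, by rw [hp, one_mul]⟩

lemma card_conjClasses (hchar : ringChar F ≠ 2) :
    Nat.card (ConjClasses (Matrix.SpecialLinearGroup (Fin 2) F)) = Fintype.card F + 4 := by
  classical
  obtain ⟨η, hη⟩ := FiniteField.exists_nonsquare hchar
  have hη0 : η ≠ 0 := fun h => hη ⟨0, by rw [h, mul_zero]⟩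
  have h2 : (2 : F) ≠ 0 := Ring.two_ne_zero hchar
  have h2m2 : (2 : F) ≠ -2 := by
    intro h
    apply h2
    have h4 : (2 : F) * 2 = 0 := by linear_combination h
    rcases mul_eq_zero.mp h4 with h' | h' <;> exact h'
  letI : Fintype (ConjClasses (Matrix.SpecialLinearGroup (Fin 2) F)) := Fintype.ofFinite _
  rw [Nat.card_eq_fintype_card, ← Finset.card_univ,
    Finset.card_eq_sum_card_fiberwise
      (f := trC) (t := Finset.univ) (fun x _ => Finset.mem_univ _)]
  have hs1 : (1 : F) * 1 = 1 := one_mul 1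
  have hsm1 : (-1 : F) * (-1) = 1 := by ring
  have key : ∀ t : F,
      (Finset.univ.filter
        fun x : ConjClasses (Matrix.SpecialLinearGroup (Fin 2) F) => trC x = t).card
      = 1 + ((if t = 2 then 2 else 0) + (if t = -2 then 2 else 0)) := by
    intro t
    by_cases ht2 : t = 2
    · subst ht2
      rw [if_pos rfl, if_neg h2m2]
      have hfil : (Finset.univ.filter
          fun x : ConjClasses (Matrix.SpecialLinearGroup (Fin 2) F) => trC x = 2)
          = {ConjClasses.mk (SS 1 hs1), ConjClasses.mk (VV 1 1 hs1),
             ConjClasses.mk (VV 1 η hs1)} := by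
        ext x
        simp only [Finset.mem_filter, Finset.mem_univ, true_and, Finset.mem_insert,
          Finset.mem_singleton]
        rw [show (2 : F) = 2 * 1 by ring]
        exact fiber_two_eq hchar hη hη0 1 hs1 x
      obtain ⟨d1, d2, d3⟩ := three_distinct hη hη0 1 hs1
      rw [hfil, Finset.card_insert_of_notMem (by simp [d1, d2]),
        Finset.card_insert_of_notMem (by simp [d3]), Finset.card_singleton]
    · by_cases htm2 : t = -2
      · subst htm2
        rw [if_neg (fun h => h2m2 (by linear_combination -h)), if_pos rfl]
        have hfil : (Finset.univ.filter
            fun x : ConjClasses (Matrix.SpecialLinearGroup (Fin 2) F) => trC x = -2)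
            = {ConjClasses.mk (SS (-1) hsm1), ConjClasses.mk (VV (-1) 1 hsm1),
               ConjClasses.mk (VV (-1) η hsm1)} := by
          ext x
          simp only [Finset.mem_filter, Finset.mem_univ, true_and, Finset.mem_insert,
            Finset.mem_singleton]
          rw [show (-2 : F) = 2 * (-1) by ring]
          exact fiber_two_eq hchar hη hη0 (-1) hsm1 x
        obtain ⟨d1, d2, d3⟩ := three_distinct hη hη0 (-1) hsm1
        rw [hfil, Finset.card_insert_of_notMem (by simp [d1, d2]),
          Finset.card_insert_of_notMem (by simp [d3]), Finset.card_singleton]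
      · rw [if_neg ht2, if_neg htm2]
        have ht : t * t - 4 ≠ 0 := by
          intro h
          have h0 : (t - 2) * (t + 2) = 0 := by linear_combination h
          rcases mul_eq_zero.mp h0 with h' | h'
          · exact ht2 (by linear_combination h')
          · exact htm2 (by linear_combination h')
        have hfil : (Finset.univ.filter
            fun x : ConjClasses (Matrix.SpecialLinearGroup (Fin 2) F) => trC x = t)
            = {ConjClasses.mk (CM t)} := by
          ext x
          simp only [Finset.mem_filter, Finset.mem_univ, true_and, Finset.mem_singleton]
          exact fiber_ne_eq hchar t ht x
        rw [hfil, Finset.card_singleton]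
  rw [Finset.sum_congr rfl (fun t _ => key t)]
  rw [Finset.sum_add_distrib, Finset.sum_add_distrib, Finset.sum_const,
    Finset.sum_ite_eq' Finset.univ (2 : F) (fun _ => 2),
    Finset.sum_ite_eq' Finset.univ (-2 : F) (fun _ => 2)]
  simp [Finset.card_univ]

end SL2Count

/-- The number of conjugacy classes of `SL_2(F_q)`, for `q` an odd prime power,
equals `q + 4`. -/
theorem stmt_14 (q : ℕ) (hq : IsPrimePow q) (hodd : Odd q)
    (F : Type*) [Field F] [Fintype F] (hF : Fintype.card F = q) :
    Nat.card (ConjClasses (Matrix.SpecialLinearGroup (Fin 2) F)) = q + 4 := by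
  have hchar : ringChar F ≠ 2 := by
    intro h
    have h0 := FiniteField.even_card_of_char_two h
    rw [hF] at h0
    rw [Nat.odd_iff] at hodd
    omega
  rw [SL2Count.card_conjClasses hchar, hF]
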